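/- Let ℓ, n, m, t be integers with 0 ≤ t ≤ m ≤ n ≤ ℓ and n − t ≤ ℓ. Fix a subset x̃ of {1,...,ℓ²} with |x̃| = n, and let S be drawn uniformly at random from the family of subsets S ⊆ {1,...,ℓ²} with |S| = ℓ and |S ∩ x̃| = n − t (assumed nonempty). Fix a subset Y ⊆ {1,...,ℓ²} with |Y| = n − m and let j = |Y ∩ x̃|. Then Pr[Y ⊆ S] = (binom(n−j, t)/binom(n, t)) · (binom(ℓ²−n−(n−m)+j, ℓ²−ℓ−t)/binom(ℓ²−n, ℓ²−ℓ−t)). -/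

import Mathlib

open scoped Classical

lemma countSup {α : Type*} [DecidableEq α] (A w : Finset α) (a : ℕ) (hw : w ⊆ A)
    (hwa : w.card ≤ a) :
    ((A.powersetCard a).filter (fun u => w ⊆ u)).card
      = (A.card - w.card).choose (a - w.card) := by
  rw [← Finset.card_sdiff_of_subset hw, ← Finset.card_powersetCard]
  apply Finset.card_bij' (fun u _ => u \ w) (fun v _ => v ∪ w)
  · intro u hu
    simp only [Finset.mem_filter, Finset.mem_powersetCard] at hu
    rw [Finset.mem_powersetCard]
    exact ⟨Finset.sdiff_subset_sdiff hu.1.1 le_rfl,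
      by rw [Finset.card_sdiff_of_subset hu.2, hu.1.2]⟩
  · intro v hv
    rw [Finset.mem_powersetCard] at hv
    have hdisj : Disjoint v w := Finset.disjoint_of_subset_left hv.1 Finset.sdiff_disjoint
    simp only [Finset.mem_filter, Finset.mem_powersetCard]
    refine ⟨⟨Finset.union_subset (hv.1.trans Finset.sdiff_subset) hw, ?_⟩,
      Finset.subset_union_right⟩
    rw [Finset.card_union_of_disjoint hdisj, hv.2]
    omega
  · intro u hu
    simp only [Finset.mem_filter] at hu
    exact Finset.sdiff_union_of_subset hu.2
  · intro v hv
    rw [Finset.mem_powersetCard] at hv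
    have hdisj : Disjoint v w := Finset.disjoint_of_subset_left hv.1 Finset.sdiff_disjoint
    rw [Finset.union_sdiff_right, Finset.sdiff_eq_self_iff_disjoint.2 hdisj]

lemma countSupEmpty {α : Type*} [DecidableEq α] (A w : Finset α) (a : ℕ)
    (hwa : a < w.card) :
    ((A.powersetCard a).filter (fun u => w ⊆ u)).card = 0 := by
  rw [Finset.card_eq_zero, Finset.filter_eq_empty_iff]
  intro u hu
  rw [Finset.mem_powersetCard] at hu
  intro hwu
  have := Finset.card_le_card hwu
  omega

lemma cardSplit {α : Type*} [Fintype α] [DecidableEq α] (A : Finset α)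
    (p q : Finset α → Prop) [DecidablePred p] [DecidablePred q] :
    (Finset.univ.filter fun s : Finset α => p (s ∩ A) ∧ q (s \ A)).card
      = (A.powerset.filter p).card * ((Aᶜ).powerset.filter q).card := by
  rw [← Finset.card_product]
  apply Finset.card_bij' (fun s _ => (s ∩ A, s \ A)) (fun pr _ => pr.1 ∪ pr.2)
  · intro s hs
    simp only [Finset.mem_filter, Finset.mem_univ, true_and] at hs
    simp only [Finset.mem_product, Finset.mem_filter, Finset.mem_powerset]
    exact ⟨⟨Finset.inter_subset_right, hs.1⟩, ⟨fun x hx => by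
      simp only [Finset.mem_compl]; exact (Finset.mem_sdiff.1 hx).2, hs.2⟩⟩
  · intro pr hpr
    simp only [Finset.mem_product, Finset.mem_filter, Finset.mem_powerset] at hpr
    have h1 : pr.1 ⊆ A := hpr.1.1
    have h2 : ∀ x ∈ pr.2, x ∉ A := fun x hx => by
      have := hpr.2.1 hx; simpa using this
    have hint : (pr.1 ∪ pr.2) ∩ A = pr.1 := by
      ext x
      simp only [Finset.mem_inter, Finset.mem_union]
      constructor
      · rintro ⟨hx | hx, hxA⟩
        · exact hx
        · exact absurd hxA (h2 x hx)
      · intro hx; exact ⟨Or.inl hx, h1 hx⟩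
    have hsd : (pr.1 ∪ pr.2) \ A = pr.2 := by
      ext x
      simp only [Finset.mem_sdiff, Finset.mem_union]
      constructor
      · rintro ⟨hx | hx, hxA⟩
        · exact absurd (h1 hx) hxA
        · exact hx
      · intro hx; exact ⟨Or.inr hx, h2 x hx⟩
    simp only [Finset.mem_filter, Finset.mem_univ, true_and, hint, hsd]
    exact ⟨hpr.1.2, hpr.2.2⟩
  · intro s _
    rw [Finset.union_comm, Finset.sdiff_union_inter]
  · intro pr hpr
    simp only [Finset.mem_product, Finset.mem_filter, Finset.mem_powerset] at hpr
    have h1 : pr.1 ⊆ A := hpr.1.1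
    have h2 : ∀ x ∈ pr.2, x ∉ A := fun x hx => by
      have := hpr.2.1 hx; simpa using this
    have hint : (pr.1 ∪ pr.2) ∩ A = pr.1 := by
      ext x
      simp only [Finset.mem_inter, Finset.mem_union]
      constructor
      · rintro ⟨hx | hx, hxA⟩
        · exact hx
        · exact absurd hxA (h2 x hx)
      · intro hx; exact ⟨Or.inl hx, h1 hx⟩
    have hsd : (pr.1 ∪ pr.2) \ A = pr.2 := by
      ext x
      simp only [Finset.mem_sdiff, Finset.mem_union]
      constructor
      · rintro ⟨hx | hx, hxA⟩
        · exact absurd (h1 hx) hxA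
        · exact hx
      · intro hx; exact ⟨Or.inr hx, h2 x hx⟩
    rw [hint, hsd]

/-- Let `S` be uniform over the subsets of `{1,…,ℓ²}` of size `ℓ` whose intersection
with a fixed `n`-element set `x̃` has size `n − t`. For a fixed `(n−m)`-element set `Y`
with `j = |Y ∩ x̃|`,
`Pr[Y ⊆ S] = (binom(n−j,t)/binom(n,t)) ·
  (binom(ℓ²−n−(n−m)+j, ℓ²−ℓ−t)/binom(ℓ²−n, ℓ²−ℓ−t))`. -/
theorem prob_contained (ℓ n m t : ℕ) (htm : t ≤ m) (hmn : m ≤ n) (hnℓ : n ≤ ℓ)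
    (xt : Finset (Fin (ℓ ^ 2))) (hxt : xt.card = n)
    (F : Finset (Finset (Fin (ℓ ^ 2))))
    (hF : F = Finset.univ.filter fun s => s.card = ℓ ∧ (s ∩ xt).card = n - t)
    (hFne : F.Nonempty)
    (Y : Finset (Fin (ℓ ^ 2))) (hYcard : Y.card = n - m)
    (j : ℕ) (hj : j = (Y ∩ xt).card) :
    (PMF.uniformOfFinset F hFne).toOuterMeasure {s | Y ⊆ s} =
      ENNReal.ofReal
        ((((n - j).choose t : ℝ) / (n.choose t : ℝ)) *
          (((ℓ ^ 2 - n - (n - m) + j).choose (ℓ ^ 2 - ℓ - t) : ℝ) /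
            ((ℓ ^ 2 - n).choose (ℓ ^ 2 - ℓ - t) : ℝ))) := by
  classical
  have hℓN : ℓ ≤ ℓ ^ 2 := Nat.le_self_pow two_ne_zero ℓ
  have hnN : n ≤ ℓ ^ 2 := hnℓ.trans hℓN
  have hquad : (ℓ = 0 ∧ ℓ ^ 2 = 0) ∨ (ℓ = 1 ∧ ℓ ^ 2 = 1) ∨ 2 * ℓ ≤ ℓ ^ 2 := by
    match ℓ with
    | 0 => exact Or.inl ⟨rfl, rfl⟩
    | 1 => exact Or.inr (Or.inl ⟨rfl, rfl⟩)
    | (k+2) => right; right; nlinarith [sq_nonneg k]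
  have hxtc : xtᶜ.card = ℓ ^ 2 - n := by
    rw [Finset.card_compl, hxt, Fintype.card_fin]
  have hjle : j ≤ n - m := by
    rw [hj, ← hYcard]; exact Finset.card_le_card Finset.inter_subset_left
  have hdY : (Y \ xt).card = n - m - j := by
    have := Finset.card_inter_add_card_sdiff Y xt
    omega
  have hdle : n - m - j ≤ ℓ ^ 2 - n := by
    rw [← hdY, ← hxtc]
    exact Finset.card_le_card fun x hx => Finset.mem_compl.2 (Finset.mem_sdiff.1 hx).2
  obtain ⟨s0, hs0⟩ := id hFne
  rw [hF, Finset.mem_filter] at hs0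
  obtain ⟨-, hs0c, hs0x⟩ := hs0
  have h2 : ℓ - (n - t) ≤ ℓ ^ 2 - n := by
    have hsub : s0 \ xt ⊆ xtᶜ :=
      fun x hx => Finset.mem_compl.2 (Finset.mem_sdiff.1 hx).2
    have hle := Finset.card_le_card hsub
    have hci := Finset.card_inter_add_card_sdiff s0 xt
    rw [hxtc] at hle
    omega
  have hFeq : F = Finset.univ.filter fun s : Finset (Fin (ℓ ^ 2)) =>
      ((s ∩ xt).card = n - t) ∧ ((s \ xt).card = ℓ - (n - t)) := by
    rw [hF]
    apply Finset.filter_congr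
    intro s _
    have hci := Finset.card_inter_add_card_sdiff s xt
    have hle : (s ∩ xt).card ≤ n := by
      rw [← hxt]; exact Finset.card_le_card Finset.inter_subset_right
    constructor
    · rintro ⟨h1, h2'⟩; exact ⟨h2', by omega⟩
    · rintro ⟨h1, h2'⟩; exact ⟨by omega, h1⟩
  have hFcard : F.card = n.choose t * (ℓ ^ 2 - n).choose (ℓ ^ 2 - ℓ - t) := by
    rw [hFeq, cardSplit xt (fun u => u.card = n - t) (fun v => v.card = ℓ - (n - t))]
    congr 1
    · rw [← Finset.powersetCard_eq_filter, Finset.card_powersetCard, hxt,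
        Nat.choose_symm (by omega : t ≤ n)]
    · rw [← Finset.powersetCard_eq_filter, Finset.card_powersetCard, hxtc]
      have he : ℓ - (n - t) = (ℓ ^ 2 - n) - (ℓ ^ 2 - ℓ - t) := by omega
      rw [he, Nat.choose_symm (by omega)]
  have hNumEq : F.filter (fun s => Y ⊆ s) = Finset.univ.filter
      fun s : Finset (Fin (ℓ ^ 2)) =>
      ((s ∩ xt).card = n - t ∧ Y ∩ xt ⊆ s ∩ xt) ∧
        ((s \ xt).card = ℓ - (n - t) ∧ Y \ xt ⊆ s \ xt) := by
    rw [hF, Finset.filter_filter]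
    apply Finset.filter_congr
    intro s _
    have hci := Finset.card_inter_add_card_sdiff s xt
    have hle : (s ∩ xt).card ≤ n := by
      rw [← hxt]; exact Finset.card_le_card Finset.inter_subset_right
    constructor
    · rintro ⟨⟨h1, h2'⟩, hY⟩
      exact ⟨⟨h2', Finset.inter_subset_inter hY Finset.Subset.rfl⟩,
        ⟨by omega, Finset.sdiff_subset_sdiff hY le_rfl⟩⟩
    · rintro ⟨⟨h1, hY1⟩, h2', hY2⟩
      refine ⟨⟨by omega, h1⟩, fun x hx => ?_⟩
      by_cases hxxt : x ∈ xt
      · exact Finset.mem_of_mem_inter_left (hY1 (Finset.mem_inter.2 ⟨hx, hxxt⟩))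
      · exact (Finset.mem_sdiff.1 (hY2 (Finset.mem_sdiff.2 ⟨hx, hxxt⟩))).1
  have hNumCard : (F.filter (fun s => Y ⊆ s)).card
      = (n - j).choose t * (ℓ ^ 2 - n - (n - m) + j).choose (ℓ ^ 2 - ℓ - t) := by
    rw [hNumEq, cardSplit xt (fun u => u.card = n - t ∧ Y ∩ xt ⊆ u)
      (fun v => v.card = ℓ - (n - t) ∧ Y \ xt ⊆ v)]
    have e1 : xt.powerset.filter (fun u => u.card = n - t ∧ Y ∩ xt ⊆ u)
        = (xt.powersetCard (n - t)).filter (fun u => Y ∩ xt ⊆ u) := by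
      rw [Finset.powersetCard_eq_filter, Finset.filter_filter]
    have e2 : xtᶜ.powerset.filter (fun v => v.card = ℓ - (n - t) ∧ Y \ xt ⊆ v)
        = (xtᶜ.powersetCard (ℓ - (n - t))).filter (fun v => Y \ xt ⊆ v) := by
      rw [Finset.powersetCard_eq_filter, Finset.filter_filter]
    rw [e1, e2]
    have hYxt : Y ∩ xt ⊆ xt := Finset.inter_subset_right
    have hYc : Y \ xt ⊆ xtᶜ :=
      fun x hx => Finset.mem_compl.2 (Finset.mem_sdiff.1 hx).2
    by_cases hc1 : j ≤ n - t
    · by_cases hc2 : n - m - j ≤ ℓ - (n - t)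
      · rw [countSup xt (Y ∩ xt) (n - t) hYxt (by omega),
          countSup xtᶜ (Y \ xt) (ℓ - (n - t)) hYc (by omega),
          hxt, hxtc, ← hj, hdY]
        congr 1
        · have he : n - t - j = (n - j) - t := by omega
          rw [he, Nat.choose_symm (by omega : t ≤ n - j)]
        · by_cases hdeg : n - m ≤ ℓ ^ 2 - n
          · have ha : ℓ ^ 2 - n - (n - m - j) = ℓ ^ 2 - n - (n - m) + j := by omega
            have hb : ℓ - (n - t) - (n - m - j)
                = (ℓ ^ 2 - n - (n - m) + j) - (ℓ ^ 2 - ℓ - t) := by omega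
            rw [ha, hb, Nat.choose_symm (by omega)]
          · have h01 : ℓ - (n - t) - (n - m - j) = 0 := by omega
            have h02 : ℓ ^ 2 - ℓ - t = 0 := by omega
            rw [h01, h02, Nat.choose_zero_right, Nat.choose_zero_right]
      · rw [countSupEmpty xtᶜ (Y \ xt) (ℓ - (n - t)) (by rw [hdY]; omega)]
        rw [Nat.choose_eq_zero_of_lt (by omega :
          ℓ ^ 2 - n - (n - m) + j < ℓ ^ 2 - ℓ - t)]
        simp
    · rw [countSupEmpty xt (Y ∩ xt) (n - t) (by rw [← hj]; omega)]
      rw [Nat.choose_eq_zero_of_lt (by omega : n - j < t)]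
      simp
  have hC0 : 0 < n.choose t := Nat.choose_pos (by omega)
  have hD : 0 < (ℓ ^ 2 - n).choose (ℓ ^ 2 - ℓ - t) := Nat.choose_pos (by omega)
  rw [PMF.toOuterMeasure_uniformOfFinset_apply]
  simp only [Set.mem_setOf_eq, Finset.filter_congr_decidable]
  have key : ∀ (inst : DecidablePred (fun s : Finset (Fin (ℓ ^ 2)) => Y ⊆ s)),
      (@Finset.filter _ _ inst F).card
        = (n - j).choose t * (ℓ ^ 2 - n - (n - m) + j).choose (ℓ ^ 2 - ℓ - t) := by
    intro inst
    have hi : inst = (fun a => Y.instDecidableRelSubset a) := Subsingleton.elim _ _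
    rw [hi]
    exact hNumCard
  rw [key _, hFcard]
  rw [div_mul_div_comm]
  rw [← Nat.cast_mul, ← Nat.cast_mul]
  rw [ENNReal.ofReal_div_of_pos (by positivity), ENNReal.ofReal_natCast,
    ENNReal.ofReal_natCast]
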